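/- Let u be a trace-free 2×2 complex matrix with u² = -η²·I (η ∈ ℂ, η ≠ 0), and let C⁰, C¹, ..., Cⁿ be 2×2 complex matrices at two vertices, written C⁰₀,...,Cⁿ₀ and C⁰₁,...,Cⁿ₁, satisfying the recursion C⁰₁ = C⁰₀, Cⁱ₁ + Cⁱ⁻¹₁·u = Cⁱ₀ + u·Cⁱ⁻¹₀ for 1 ≤ i ≤ n, and Cⁿ₁·u = u·Cⁿ₀. Define A₀ := Cⁿ₀ - η²·Cⁿ⁻²₀ + η⁴·Cⁿ⁻⁴₀ - ⋯ and B₀ := Cⁿ⁻¹₀ - η²·Cⁿ⁻³₀ + ⋯ . Then u·(A₀ - B₀·u) = (A₀ - B₀·u)·u, i.e. A₀ - B₀·u commutes with u. -/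
import Mathlib



open Finset in
private lemma parity_sum' {M : Type*} [AddCommMonoid M] (n m : ℕ) (h1 : m ≤ n) (h2 : n ≤ m + 1)
    (g : ℕ → M) :
    ∑ i ∈ (Finset.range (n+1)).filter (fun i => i % 2 = m % 2), g i
      = ∑ j ∈ Finset.range (m / 2 + 1), g (m - 2 * j) := by
  apply Finset.sum_nbij' (fun i => (m - i) / 2) (fun j => m - 2 * j) <;>
    intro a ha <;> simp only [Finset.mem_filter, Finset.mem_range] at *
  · omega
  · omega
  · omega
  · omega
  · congr 1; omega

open Finset in
/-- Key computation of Lemma 4.10 (fixed point relations): from the polynomial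
intertwining recursion, A₀ - B₀·u commutes with u, where A₀ and B₀ are the
alternating sums A₀ = Cⁿ₀ - η²Cⁿ⁻²₀ + ⋯ and B₀ = Cⁿ⁻¹₀ - η²Cⁿ⁻³₀ + ⋯ . -/
theorem stmt_14 (n : ℕ) (hn : 1 ≤ n) (η : ℂ) (hη : η ≠ 0)
    (u : Matrix (Fin 2) (Fin 2) ℂ) (hutr : u.trace = 0)
    (hu2 : u * u = (-(η ^ 2)) • (1 : Matrix (Fin 2) (Fin 2) ℂ))
    (C0 C1 : ℕ → Matrix (Fin 2) (Fin 2) ℂ)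
    (h0 : C1 0 = C0 0)
    (hrec : ∀ i, 1 ≤ i → i ≤ n → C1 i + C1 (i - 1) * u = C0 i + u * C0 (i - 1))
    (htop : C1 n * u = u * C0 n)
    (A₀ B₀ : Matrix (Fin 2) (Fin 2) ℂ)
    (hA : A₀ = ∑ j ∈ Finset.range (n / 2 + 1), ((-(η ^ 2)) ^ j) • C0 (n - 2 * j))
    (hB : B₀ = ∑ j ∈ Finset.range ((n - 1) / 2 + 1),
      ((-(η ^ 2)) ^ j) • C0 (n - 1 - 2 * j)) :
    u * (A₀ - B₀ * u) = (A₀ - B₀ * u) * u := by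
  classical
  obtain ⟨t, ht0, ht2⟩ : ∃ t : ℂ, t ≠ 0 ∧ t ^ 2 * (-(η ^ 2)) = 1 :=
    ⟨Complex.I / η, div_ne_zero Complex.I_ne_zero hη, by
      rw [div_pow, Complex.I_sq]; field_simp⟩
  -- the polynomials
  have key : ∀ s : ℂ, (∑ i ∈ range (n+1), s ^ i • C1 i) * (1 + s • u)
      = (1 + s • u) * (∑ i ∈ range (n+1), s ^ i • C0 i) := by
    intro s
    simp only [mul_add, add_mul, mul_one, one_mul, Finset.sum_mul, Finset.mul_sum]
    have l1 : ∀ i : ℕ, (s ^ i • C1 i) * (s • u) = s ^ (i+1) • (C1 i * u) := by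
      intro i
      rw [smul_mul_assoc, mul_smul_comm, smul_smul, pow_succ]
    have l2 : ∀ i : ℕ, (s • u) * (s ^ i • C0 i) = s ^ (i+1) • (u * C0 i) := by
      intro i
      rw [smul_mul_assoc, mul_smul_comm, smul_smul, mul_comm s (s ^ i), pow_succ]
    simp only [l1, l2]
    rw [Finset.sum_add_distrib]
    rw [Finset.sum_range_succ' (fun i => s ^ i • C1 i) n,
        Finset.sum_range_succ (fun i => s ^ (i+1) • (C1 i * u)) n,
        Finset.sum_range_succ' (fun i => s ^ i • C0 i) n,
        Finset.sum_range_succ (fun i => s ^ (i+1) • (u * C0 i)) n]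
    have hre : ∀ i ∈ range n, s ^ (i+1) • C1 (i+1) + s ^ (i+1) • (C1 i * u)
        = s ^ (i+1) • C0 (i+1) + s ^ (i+1) • (u * C0 i) := by
      intro i hi
      rw [← smul_add, ← smul_add]
      congr 1
      have := hrec (i+1) (by omega) (by simp only [mem_range] at hi; omega)
      simpa using this
    calc (∑ i ∈ range n, s ^ (i+1) • C1 (i+1) + s ^ 0 • C1 0)
          + (∑ i ∈ range n, s ^ (i+1) • (C1 i * u) + s ^ (n+1) • (C1 n * u))
        = (∑ i ∈ range n, (s ^ (i+1) • C1 (i+1) + s ^ (i+1) • (C1 i * u)))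
          + (s ^ 0 • C1 0 + s ^ (n+1) • (C1 n * u)) := by
          rw [Finset.sum_add_distrib]; abel
      _ = (∑ i ∈ range n, (s ^ (i+1) • C0 (i+1) + s ^ (i+1) • (u * C0 i)))
          + (s ^ 0 • C0 0 + s ^ (n+1) • (u * C0 n)) := by
          rw [Finset.sum_congr rfl hre, h0, htop]
      _ = (∑ i ∈ range n, s ^ (i+1) • C0 (i+1) + s ^ 0 • C0 0)
          + (∑ i ∈ range n, s ^ (i+1) • (u * C0 i) + s ^ (n+1) • (u * C0 n)) := by
          rw [Finset.sum_add_distrib]; abel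
  obtain ⟨Pt, hPt⟩ : ∃ X, X = ∑ i ∈ range (n+1), t ^ i • C0 i := ⟨_, rfl⟩
  obtain ⟨Pnt, hPnt⟩ : ∃ X, X = ∑ i ∈ range (n+1), (-t) ^ i • C0 i := ⟨_, rfl⟩
  obtain ⟨Qt, hQt⟩ : ∃ X, X = ∑ i ∈ range (n+1), t ^ i • C1 i := ⟨_, rfl⟩
  obtain ⟨Qnt, hQnt⟩ : ∃ X, X = ∑ i ∈ range (n+1), (-t) ^ i • C1 i := ⟨_, rfl⟩
  -- parity decompositions
  have hcoefA : ∀ i ∈ (range (n+1)).filter (fun i => i % 2 = n % 2),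
      t ^ i • C0 i + ((-1:ℂ)) ^ n • ((-t) ^ i • C0 i) = (2 * t ^ i) • C0 i := by
    intro i hi
    simp only [mem_filter, mem_range] at hi
    have hev : Even (n + i) := Nat.even_iff.mpr (by omega)
    rw [smul_smul, ← neg_one_mul t, mul_pow,
        show (-1:ℂ)^n * ((-1:ℂ)^i * t^i) = (-1:ℂ)^(n+i) * t^i by rw [pow_add]; ring,
        Even.neg_one_pow hev, one_mul, ← add_smul]
    congr 1; ring
  have hcoefA0 : ∀ i ∈ (range (n+1)).filter (fun i => ¬ i % 2 = n % 2),
      t ^ i • C0 i + ((-1:ℂ)) ^ n • ((-t) ^ i • C0 i) = 0 := by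
    intro i hi
    simp only [mem_filter, mem_range] at hi
    have hodd : Odd (n + i) := Nat.odd_iff.mpr (by omega)
    rw [smul_smul, ← neg_one_mul t, mul_pow,
        show (-1:ℂ)^n * ((-1:ℂ)^i * t^i) = (-1:ℂ)^(n+i) * t^i by rw [pow_add]; ring,
        Odd.neg_one_pow hodd, ← add_smul]
    simp
  have hPA : Pt + ((-1:ℂ)) ^ n • Pnt = (2 * t ^ n) • A₀ := by
    rw [hPt, hPnt, Finset.smul_sum, ← Finset.sum_add_distrib,
        ← Finset.sum_filter_add_sum_filter_not (range (n+1)) (fun i => i % 2 = n % 2),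
        Finset.sum_congr rfl hcoefA, Finset.sum_congr rfl hcoefA0, Finset.sum_const_zero,
        add_zero, parity_sum' n n le_rfl (by omega), hA, Finset.smul_sum]
    refine Finset.sum_congr rfl fun j hj => ?_
    simp only [mem_range] at hj
    rw [smul_smul]
    congr 1
    have h2j : 2 * j ≤ n := by omega
    have hsplit : t ^ n = t ^ (n - 2*j) * t ^ (2*j) := by rw [← pow_add]; congr 1; omega
    have hpow : t ^ (2*j) * (-(η^2)) ^ j = 1 := by
      rw [pow_mul, ← mul_pow, ht2, one_pow]
    calc (2 : ℂ) * t ^ (n - 2*j)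
        = 2 * t ^ (n-2*j) * (t ^ (2*j) * (-(η^2)) ^ j) := by rw [hpow]; ring
      _ = 2 * t ^ n * (-(η^2)) ^ j := by rw [hsplit]; ring
  have hcoefB : ∀ i ∈ (range (n+1)).filter (fun i => i % 2 = (n-1) % 2),
      t ^ i • C0 i - ((-1:ℂ)) ^ n • ((-t) ^ i • C0 i) = (2 * t ^ i) • C0 i := by
    intro i hi
    simp only [mem_filter, mem_range] at hi
    have hodd : Odd (n + i) := Nat.odd_iff.mpr (by omega)
    rw [smul_smul, ← neg_one_mul t, mul_pow,
        show (-1:ℂ)^n * ((-1:ℂ)^i * t^i) = (-1:ℂ)^(n+i) * t^i by rw [pow_add]; ring,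
        Odd.neg_one_pow hodd, ← sub_smul]
    congr 1; ring
  have hcoefB0 : ∀ i ∈ (range (n+1)).filter (fun i => ¬ i % 2 = (n-1) % 2),
      t ^ i • C0 i - ((-1:ℂ)) ^ n • ((-t) ^ i • C0 i) = 0 := by
    intro i hi
    simp only [mem_filter, mem_range] at hi
    have hev : Even (n + i) := Nat.even_iff.mpr (by omega)
    rw [smul_smul, ← neg_one_mul t, mul_pow,
        show (-1:ℂ)^n * ((-1:ℂ)^i * t^i) = (-1:ℂ)^(n+i) * t^i by rw [pow_add]; ring,
        Even.neg_one_pow hev, one_mul, sub_self]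
  have hPB : Pt - ((-1:ℂ)) ^ n • Pnt = (2 * t ^ (n-1)) • B₀ := by
    rw [hPt, hPnt, Finset.smul_sum, ← Finset.sum_sub_distrib,
        ← Finset.sum_filter_add_sum_filter_not (range (n+1)) (fun i => i % 2 = (n-1) % 2),
        Finset.sum_congr rfl hcoefB, Finset.sum_congr rfl hcoefB0, Finset.sum_const_zero,
        add_zero, parity_sum' n (n-1) (by omega) (by omega), hB, Finset.smul_sum]
    refine Finset.sum_congr rfl fun j hj => ?_
    simp only [mem_range] at hj
    rw [smul_smul]
    congr 1
    have h2j : 2 * j ≤ n - 1 := by omega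
    have hsplit : t ^ (n-1) = t ^ (n - 1 - 2*j) * t ^ (2*j) := by rw [← pow_add]; congr 1; omega
    have hpow : t ^ (2*j) * (-(η^2)) ^ j = 1 := by
      rw [pow_mul, ← mul_pow, ht2, one_pow]
    calc (2 : ℂ) * t ^ (n - 1 - 2*j)
        = 2 * t ^ (n-1-2*j) * (t ^ (2*j) * (-(η^2)) ^ j) := by rw [hpow]; ring
      _ = 2 * t ^ (n-1) * (-(η^2)) ^ j := by rw [hsplit]; ring
  -- the idempotent-like elements
  obtain ⟨v, hv⟩ : ∃ X, X = t • u := ⟨_, rfl⟩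
  obtain ⟨e, he⟩ : ∃ X, X = (1 : Matrix (Fin 2) (Fin 2) ℂ) + v := ⟨_, rfl⟩
  obtain ⟨f, hf⟩ : ∃ X, X = (1 : Matrix (Fin 2) (Fin 2) ℂ) - v := ⟨_, rfl⟩
  have huu : v * v = 1 := by
    rw [hv, smul_mul_assoc, mul_smul_comm, hu2, smul_smul, smul_smul]
    rw [show t * t * -η ^ 2 = (1:ℂ) by linear_combination ht2, one_smul]
  have hef : e * f = 0 := by
    rw [he, hf, mul_sub, mul_one, add_mul, one_mul, huu]; abel
  have hfe : f * e = 0 := by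
    rw [he, hf, sub_mul, one_mul, mul_add, mul_one, huu]; abel
  have hepf : e + f = 2 • (1 : Matrix (Fin 2) (Fin 2) ℂ) := by
    rw [he, hf]; abel
  have hkeyt : Qt * e = e * Pt := by
    rw [hQt, hPt, he, hv]; exact key t
  have hkeynt : Qnt * f = f * Pnt := by
    have h := key (-t)
    rw [neg_smul] at h
    rw [hQnt, hPnt, hf, hv, sub_eq_add_neg]
    exact h
  -- the commuting element
  obtain ⟨R, hR⟩ : ∃ X, X = ((-1:ℂ)) ^ n • Pnt := ⟨_, rfl⟩
  obtain ⟨S, hS⟩ : ∃ X, X = Pt * f + R * e := ⟨_, rfl⟩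
  have hSM : S = (2 * t ^ n) • (A₀ - B₀ * u) := by
    have expand : S = (Pt + R) - ((Pt - R) * v) := by
      rw [hS, hf, he, mul_sub, mul_one, mul_add, mul_one, sub_mul]
      abel
    rw [expand, hR, hPA, hPB, hv, smul_mul_assoc, mul_smul_comm, smul_smul]
    rw [show 2 * t ^ (n-1) * t = 2 * t ^ n by
      rw [mul_assoc, ← pow_succ]; congr 2; omega]
    rw [smul_sub]
  have hePf : e * Pt * f = 0 := by rw [← hkeyt, mul_assoc, hef, mul_zero]
  have hfRe : f * R * e = 0 := by
    rw [hR, mul_smul_comm, ← hkeynt, smul_mul_assoc, mul_assoc, hfe, mul_zero, smul_zero]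
  have hee : e * e = 2 • e := by
    have h := congrArg (fun x => e * x) hepf
    simp only [mul_add, mul_smul_comm, mul_one] at h
    rw [hef, add_zero] at h
    exact h
  have hRe : e * (R * e) = 2 • (R * e) := by
    have h := congrArg (fun x => x * (R * e)) hepf
    simp only [add_mul, smul_mul_assoc, one_mul] at h
    rw [show f * (R * e) = f * R * e by rw [mul_assoc], hfRe, add_zero] at h
    exact h
  have hcomm : e * S = S * e := by
    rw [hS, mul_add, add_mul, ← mul_assoc e Pt f, hePf, hRe,
        mul_assoc Pt f e, hfe, mul_zero, mul_assoc R e e, hee, mul_smul_comm]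
  have huS : u * S = S * u := by
    have h := hcomm
    rw [he, hv, add_mul, mul_add, one_mul, mul_one, smul_mul_assoc, mul_smul_comm] at h
    have h2 : t • (u * S) = t • (S * u) := add_left_cancel h
    exact smul_right_injective _ ht0 h2
  have hc : (2 * t ^ n : ℂ) ≠ 0 := mul_ne_zero two_ne_zero (pow_ne_zero _ ht0)
  have hfin : u * ((2 * t ^ n) • (A₀ - B₀ * u)) = ((2 * t ^ n) • (A₀ - B₀ * u)) * u := by
    rw [← hSM]; exact huS
  rw [mul_smul_comm, smul_mul_assoc] at hfin
  exact smul_right_injective _ hc hfin
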